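/- arXiv:1704.06525 — 5 statements merged into one kernel-verified Lean document; each statement's English description precedes it below -/
import Mathlib

section
/- Let s ∈ ℂ and κ, λ, λ₀ > 0, and set τ = √(κλ₀(1+κλ)). Consider g(v) = |v − s|² + κλ|v|² + κλ₀·1{v ≠ 0} on ℂ. If |s| > τ, then g has the unique minimizer v = s/(1+κλ); if |s| < τ, then g has the unique minimizer v = 0. -/
lemma key_identity (s v : ℂ) (a : ℝ) (ha : a ≠ 0) :
    Complex.normSq (v - s) + (a - 1) * Complex.normSq v
      = a * Complex.normSq (v - s / (a : ℂ)) + (a - 1) / a * Complex.normSq s := by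
  simp only [Complex.normSq_apply, Complex.sub_re, Complex.sub_im, Complex.div_re,
    Complex.div_im, Complex.ofReal_re, Complex.ofReal_im, Complex.normSq_apply]
  field_simp
  ring

/-- For `s ∈ ℂ`, `κ, λ, λ₀ > 0` and `τ = √(κλ₀(1+κλ))`, the function
`g(v) = |v − s|² + κλ|v|² + κλ₀·1{v ≠ 0}` on `ℂ` has unique minimizer `s/(1+κλ)` when
`|s| > τ`, and unique minimizer `0` when `|s| < τ`. -/
theorem scalar_lse_hard_threshold (s : ℂ) (κ lam lam0 : ℝ)
    (hκ : 0 < κ) (hlam : 0 < lam) (hlam0 : 0 < lam0)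
    (τ : ℝ) (hτ : τ = Real.sqrt (κ * lam0 * (1 + κ * lam))) :
    let g : ℂ → ℝ := fun v =>
      ‖v - s‖ ^ 2 + κ * lam * ‖v‖ ^ 2 +
        κ * lam0 * (if v = 0 then 0 else 1)
    (‖s‖ > τ →
      (∀ v, g (s / ((1 + κ * lam : ℝ) : ℂ)) ≤ g v) ∧
      (∀ v, (∀ w, g v ≤ g w) → v = s / ((1 + κ * lam : ℝ) : ℂ))) ∧
    (‖s‖ < τ →
      (∀ v, g 0 ≤ g v) ∧ (∀ v, (∀ w, g v ≤ g w) → v = 0)) := by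
  intro g
  set a : ℝ := 1 + κ * lam with ha
  have ha0 : (0:ℝ) < a := by positivity
  have ha1 : (1:ℝ) < a := by nlinarith
  have hane : a ≠ 0 := ne_of_gt ha0
  have hτ0 : 0 ≤ τ := hτ ▸ Real.sqrt_nonneg _
  have hτsq : τ ^ 2 = κ * lam0 * a := by
    rw [hτ, Real.sq_sqrt (by positivity)]
  set vs : ℂ := s / ((a : ℝ) : ℂ) with hvs
  set A : ℝ := ‖s‖ ^ 2 with hA
  have hA0 : 0 ≤ A := by positivity
  clear_value A vs a
  -- quadratic part identity
  have hquad : ∀ v : ℂ, ‖v - s‖ ^ 2 + κ * lam * ‖v‖ ^ 2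
      = a * ‖v - vs‖ ^ 2 + κ * lam / a * A := by
    intro v
    have := key_identity s v a hane
    simpa [Complex.sq_norm, hvs, hA, ha, add_sub_cancel_left] using this
  have hfrac : κ * lam / a * A = A - A / a := by
    field_simp
    rw [ha]; ring
  have habs : ∀ z : ℂ, 0 ≤ ‖z‖ ^ 2 := fun z => by positivity
  have hg0 : g 0 = A := by simp [g, hA]
  have hgne : ∀ v : ℂ, v ≠ 0 →
      g v = a * ‖v - vs‖ ^ 2 + (A - A / a + κ * lam0) := by
    intro v hv
    simp only [g, if_neg hv, mul_one]
    rw [hquad v, hfrac]; ring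
  have hnn : ∀ v : ℂ, 0 ≤ a * ‖v - vs‖ ^ 2 :=
    fun v => mul_nonneg ha0.le (habs _)
  constructor
  · -- case |s| > τ
    intro hbig
    have hs0 : s ≠ 0 := by
      intro h
      rw [h] at hbig; simp at hbig
      exact absurd hbig (not_lt.mpr hτ0)
    have hvs0 : vs ≠ 0 := by
      simp only [hvs, div_ne_zero_iff]
      exact ⟨hs0, by exact_mod_cast hane⟩
    have hssq : τ ^ 2 < A := by
      have := norm_nonneg s
      rw [hA]; nlinarith
    have hAdiv : κ * lam0 < A / a := (lt_div_iff₀ ha0).mpr (by nlinarith)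
    have hgvs : g vs = A - A / a + κ * lam0 := by
      rw [hgne vs hvs0]
      simp
    have hmin : ∀ v, g vs ≤ g v := by
      intro v
      by_cases hv : v = 0
      · rw [hv, hg0, hgvs]; linarith
      · rw [hgne v hv, hgvs]
        have hq := hnn v; linarith
    refine ⟨hmin, ?_⟩
    intro v hv
    by_cases h0 : v = 0
    · exfalso
      have := hv vs
      rw [h0, hg0, hgvs] at this
      linarith
    · have := hv vs
      rw [hgne v h0, hgvs] at this
      have h2 : ‖v - vs‖ = 0 := by
        have h3 := norm_nonneg (v - vs)
        nlinarith
      exact sub_eq_zero.mp (norm_eq_zero.mp h2)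
  · -- case |s| < τ
    intro hsmall
    have hssq : A < τ ^ 2 := by
      have := norm_nonneg s
      rw [hA]; nlinarith
    have hAdiv : A / a < κ * lam0 := (div_lt_iff₀ ha0).mpr (by nlinarith)
    have hAa : 0 ≤ A / a := by positivity
    have hmin : ∀ v, g 0 ≤ g v := by
      intro v
      by_cases hv : v = 0
      · rw [hv]
      · rw [hgne v hv, hg0]
        have hq := hnn v; linarith
    refine ⟨hmin, ?_⟩
    intro v hv
    by_contra h0
    have := hv 0
    rw [hg0, hgne v h0] at this
    have hq := hnn v; linarith
end

section
/- Let s ~ CN(0, λ) with λ > 0, let κ, λₚ, λ₀ > 0, τ = √(κλ₀(1+κλₚ)), and define the hard-thresholded random variable x = s/(1+κλₚ) if |s| ≥ τ and x = 0 if |s| < τ. Then E[|x|²] = ((λ + τ²)/(1+κλₚ)²)·e^{−τ²/λ}. -/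
open MeasureTheory ProbabilityTheory
open Real Set Filter Topology NNReal

/-- The law of a circularly symmetric complex Gaussian `s = a + b·i` with variance `λ`,
modeled as the product of two real Gaussians `N(0, λ/2)` on the plane `ℝ × ℝ`. -/
noncomputable def complexGaussian (lam : ℝ) : Measure (ℝ × ℝ) :=
  (gaussianReal 0 (Real.toNNReal (lam / 2))).prod (gaussianReal 0 (Real.toNNReal (lam / 2)))

/-- The complex number corresponding to a point of the plane. -/
noncomputable def toC (p : ℝ × ℝ) : ℂ := (p.1 : ℂ) + (p.2 : ℂ) * Complex.I

private lemma tendsto_aux {lam : ℝ} (hlam : 0 < lam) :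
    Tendsto (fun r : ℝ => -(lam/2) * ((r^2 + lam) * Real.exp (-r^2/lam))) atTop (𝓝 0) := by
  have h1 : Tendsto (fun u : ℝ => (lam * u + lam) * Real.exp (-u)) atTop (𝓝 0) := by
    have := ((Real.tendsto_pow_mul_exp_neg_atTop_nhds_zero 1).const_mul lam).add
      (Real.tendsto_exp_neg_atTop_nhds_zero.const_mul lam)
    simpa [add_mul, mul_assoc, pow_one] using this
  have h2 : Tendsto (fun r : ℝ => r^2 / lam) atTop atTop :=
    (tendsto_pow_atTop two_ne_zero).atTop_div_const hlam
  have h3 := h1.comp h2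
  have : (fun r : ℝ => (lam * (r^2/lam) + lam) * Real.exp (-(r^2/lam)))
      = fun r : ℝ => (r^2 + lam) * Real.exp (-r^2/lam) := by
    funext r
    rw [mul_div_cancel₀ _ hlam.ne', neg_div]
  rw [Function.comp_def, this] at h3
  simpa using h3.const_mul (-(lam/2))

private lemma ftc_aux {lam τ : ℝ} (hlam : 0 < lam) (hτ : 0 ≤ τ) :
    ∫ r in Ioi τ, r^3 * Real.exp (-r^2/lam)
      = lam/2 * ((τ^2 + lam) * Real.exp (-τ^2/lam)) := by
  have hderiv : ∀ r ∈ Ici τ, HasDerivAt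
      (fun r : ℝ => -(lam/2) * ((r^2 + lam) * Real.exp (-r^2/lam)))
      (r^3 * Real.exp (-r^2/lam)) r := by
    intro r _
    have h1 : HasDerivAt (fun r : ℝ => r^2 + lam) (2*r) r := by
      simpa using ((hasDerivAt_pow 2 r).add_const lam)
    have h2 : HasDerivAt (fun r : ℝ => Real.exp (-r^2/lam))
        ((-2*r/lam) * Real.exp (-r^2/lam)) r := by
      have h3 : HasDerivAt (fun r : ℝ => -r^2/lam) (-2*r/lam) r := by
        simpa [neg_div, neg_mul, Pi.neg_def] using ((hasDerivAt_pow 2 r).div_const lam).neg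
      simpa [mul_comm] using h3.exp
    have := ((h1.mul h2).const_mul (-(lam/2)))
    convert this using 1
    iterate 3 rfl
    field_simp [hlam.ne']
    ring
  have hpos : ∀ r ∈ Ioi τ, 0 ≤ r^3 * Real.exp (-r^2/lam) := by
    intro r hr
    have : (0:ℝ) ≤ r := le_trans hτ (le_of_lt hr)
    positivity
  have := integral_Ioi_of_hasDerivAt_of_nonneg' hderiv hpos (tendsto_aux hlam)
  rw [this]
  ring

private lemma transfer {v : ℝ≥0} (hv : v ≠ 0) {f : ℝ × ℝ → ℝ} (hf : Measurable f)
    (hf0 : ∀ p, 0 ≤ f p) :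
    ∫ p, f p ∂((gaussianReal 0 v).prod (gaussianReal 0 v))
      = ∫ p : ℝ × ℝ, gaussianPDFReal 0 v p.1 * (gaussianPDFReal 0 v p.2 * f p) := by
  have hG := measurable_gaussianPDF 0 v
  have hGR := measurable_gaussianPDFReal 0 v
  have hG0 := gaussianPDFReal_nonneg 0 v
  rw [integral_eq_lintegral_of_nonneg_ae (ae_of_all _ hf0) hf.aestronglyMeasurable,
    integral_eq_lintegral_of_nonneg_ae
      (ae_of_all _ fun p => mul_nonneg (hG0 _) (mul_nonneg (hG0 _) (hf0 _)))
      (((hGR.comp measurable_fst).mul ((hGR.comp measurable_snd).mul hf)).aestronglyMeasurable)]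
  congr 1
  have hFm : Measurable fun p : ℝ × ℝ => ENNReal.ofReal (f p) := hf.ennreal_ofReal
  calc ∫⁻ p, ENNReal.ofReal (f p) ∂((gaussianReal 0 v).prod (gaussianReal 0 v))
      = ∫⁻ x, ∫⁻ y, ENNReal.ofReal (f (x, y)) ∂(gaussianReal 0 v) ∂(gaussianReal 0 v) :=
        lintegral_prod _ hFm.aemeasurable
    _ = ∫⁻ x, ∫⁻ y, gaussianPDF 0 v y * ENNReal.ofReal (f (x, y)) ∂volume
          ∂(gaussianReal 0 v) := by
        congr 1; funext x
        rw [gaussianReal_of_var_ne_zero _ hv,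
          lintegral_withDensity_eq_lintegral_mul _ hG (by fun_prop)]
        rfl
    _ = ∫⁻ x, gaussianPDF 0 v x *
          ∫⁻ y, gaussianPDF 0 v y * ENNReal.ofReal (f (x, y)) ∂volume ∂volume := by
        rw [gaussianReal_of_var_ne_zero _ hv,
          lintegral_withDensity_eq_lintegral_mul _ hG
          ((by fun_prop : Measurable (Function.uncurry fun x y : ℝ =>
            gaussianPDF 0 v y * ENNReal.ofReal (f (x, y)))).lintegral_prod_right)]
        rfl
    _ = ∫⁻ x, ∫⁻ y, gaussianPDF 0 v x * (gaussianPDF 0 v y * ENNReal.ofReal (f (x, y)))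
          ∂volume ∂volume := by
        congr 1; funext x
        rw [lintegral_const_mul _ (by fun_prop)]
    _ = ∫⁻ p : ℝ × ℝ, gaussianPDF 0 v p.1 * (gaussianPDF 0 v p.2 * ENNReal.ofReal (f p))
          ∂volume := by
        rw [Measure.volume_eq_prod, lintegral_prod _ (by fun_prop)]
    _ = ∫⁻ p : ℝ × ℝ, ENNReal.ofReal (gaussianPDFReal 0 v p.1 *
          (gaussianPDFReal 0 v p.2 * f p)) ∂volume := by
        congr 1; funext p
        rw [ENNReal.ofReal_mul (hG0 _), ENNReal.ofReal_mul (hG0 _)]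
        rfl

private lemma polar_calc {lam τ c : ℝ} (hlam : 0 < lam) (hτ : 0 < τ) (hc : 0 < c) :
    ∫ p : ℝ × ℝ, (π * lam)⁻¹ * Real.exp (-(p.1^2 + p.2^2)/lam) *
      (if τ ≤ Real.sqrt (p.1^2 + p.2^2) then (p.1^2 + p.2^2)/c^2 else 0)
    = (lam + τ^2)/c^2 * Real.exp (-(τ^2)/lam) := by
  have hftc := ftc_aux hlam hτ.le
  rw [← integral_comp_polarCoord_symm]
  have hset : MeasurableSet polarCoord.target :=
    measurableSet_Ioi.prod measurableSet_Ioo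
  rw [setIntegral_congr_fun hset (g := fun q : ℝ × ℝ =>
      (fun r : ℝ => (Ici τ).indicator
        (fun r => ((π * lam)⁻¹ / c^2) * (r^3 * Real.exp (-r^2/lam))) r) q.1
      * (fun _ : ℝ => (1:ℝ)) q.2)]
  · rw [polarCoord_target, Measure.volume_eq_prod,
      setIntegral_prod_mul (fun r : ℝ => (Ici τ).indicator
        (fun r => ((π * lam)⁻¹ / c^2) * (r^3 * Real.exp (-r^2/lam))) r)
        (fun _ : ℝ => (1:ℝ)) (Ioi 0) (Ioo (-π) π),
      setIntegral_indicator measurableSet_Ici,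
      Set.inter_eq_right.mpr (Set.Ici_subset_Ioi.mpr hτ),
      integral_Ici_eq_integral_Ioi, integral_const_mul, hftc]
    simp only [integral_const, Measure.restrict_apply MeasurableSet.univ, Set.univ_inter,
      Real.volume_Ioo, measureReal_restrict_apply_univ,
      Real.volume_real_Ioo_of_le (by linarith [Real.pi_pos] : -π ≤ π), sub_neg_eq_add, ← two_mul, ENNReal.toReal_ofReal
      (by positivity : (0:ℝ) ≤ 2 * π), smul_eq_mul, mul_one]
    field_simp
    ring
  · rintro ⟨r, θ⟩ ⟨hr, hθ⟩
    simp only [polarCoord_symm_apply]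
    have habs : (r * Real.cos θ)^2 + (r * Real.sin θ)^2 = r^2 := by
      have := Real.sin_sq_add_cos_sq θ
      nlinarith [this]
    rw [habs, Real.sqrt_sq (le_of_lt hr)]
    simp only [Set.indicator_apply, mem_Ici, smul_eq_mul, mul_one]
    by_cases h : τ ≤ r
    · simp only [if_pos h]
      ring
    · simp only [if_neg h, mul_zero]

/-- Let `s ~ CN(0, λ)`, `κ, λₚ, λ₀ > 0`, `τ = √(κλ₀(1+κλₚ))`, and let
`x = s/(1+κλₚ)` if `|s| ≥ τ` and `x = 0` otherwise.  Then
`E[|x|²] = ((λ + τ²)/(1+κλₚ)²)·e^{−τ²/λ}`. -/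
theorem expectation_sq_hard_thresholded (lam κ lamp lam0 τ : ℝ)
    (hlam : 0 < lam) (hκ : 0 < κ) (hlamp : 0 < lamp) (hlam0 : 0 < lam0)
    (hτ : τ = Real.sqrt (κ * lam0 * (1 + κ * lamp))) :
    let x : ℝ × ℝ → ℂ := fun p =>
      if τ ≤ ‖toC p‖ then toC p / ((1 + κ * lamp : ℝ) : ℂ) else 0
    (∫ p : ℝ × ℝ, ‖x p‖ ^ 2 ∂(complexGaussian lam))
      = ((lam + τ ^ 2) / (1 + κ * lamp) ^ 2) * Real.exp (-(τ ^ 2) / lam) := by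
  intro x
  set c : ℝ := 1 + κ * lamp with hcdef
  have hc : 0 < c := by positivity
  have hτpos : 0 < τ := by
    rw [hτ]
    apply Real.sqrt_pos.mpr
    positivity
  set f : ℝ × ℝ → ℝ := fun p =>
    if τ ≤ Real.sqrt (p.1^2 + p.2^2) then (p.1^2 + p.2^2)/c^2 else 0 with hfdef
  have habs : ∀ p : ℝ × ℝ, ‖toC p‖ = Real.sqrt (p.1^2 + p.2^2) := by
    intro p
    rw [toC, Complex.norm_def, Complex.normSq_add_mul_I]
  have hx : ∀ p : ℝ × ℝ, ‖x p‖ ^ 2 = f p := by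
    intro p
    show ‖(if τ ≤ ‖toC p‖
      then toC p / ((c : ℝ) : ℂ) else 0)‖ ^ 2 = f p
    simp only [hfdef]
    by_cases h : τ ≤ Real.sqrt (p.1^2 + p.2^2)
    · rw [if_pos (by rwa [habs]), if_pos h, norm_div, Complex.norm_real, Real.norm_eq_abs,
        abs_of_pos hc, div_pow, habs, Real.sq_sqrt (by positivity)]
    · rw [if_neg (by rwa [habs]), if_neg h]
      simp
  rw [integral_congr_ae (ae_of_all _ hx)]
  set v : ℝ≥0 := Real.toNNReal (lam / 2) with hvdef
  have hv : v ≠ 0 := by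
    simp only [hvdef, ne_eq, Real.toNNReal_eq_zero, not_le]
    linarith
  have hvr : (v : ℝ) = lam / 2 := Real.coe_toNNReal _ (by linarith)
  have hfm : Measurable f := by
    apply Measurable.ite _ (by fun_prop) measurable_const
    exact measurableSet_le measurable_const (by fun_prop)
  have hf0 : ∀ p, 0 ≤ f p := by
    intro p
    simp only [hfdef]
    split
    · positivity
    · exact le_refl 0
  rw [complexGaussian, transfer hv hfm hf0]
  have hGa : ∀ a : ℝ, gaussianPDFReal 0 v a
      = (Real.sqrt (π * lam))⁻¹ * Real.exp (-a^2/lam) := by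
    intro a
    rw [gaussianPDFReal, hvr]
    congr 2
    · ring
    · ring
  have hpt : ∀ p : ℝ × ℝ, gaussianPDFReal 0 v p.1 * (gaussianPDFReal 0 v p.2 * f p)
      = (π * lam)⁻¹ * Real.exp (-(p.1^2 + p.2^2)/lam) * f p := by
    intro p
    rw [hGa, hGa]
    have h1 : (Real.sqrt (π * lam))⁻¹ * Real.exp (-p.1^2/lam) *
        ((Real.sqrt (π * lam))⁻¹ * Real.exp (-p.2^2/lam) * f p)
        = ((Real.sqrt (π * lam))⁻¹ * (Real.sqrt (π * lam))⁻¹) *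
          (Real.exp (-p.1^2/lam) * Real.exp (-p.2^2/lam)) * f p := by ring
    rw [h1, ← mul_inv, Real.mul_self_sqrt (by positivity), ← Real.exp_add,
      show -p.1^2/lam + -p.2^2/lam = -(p.1^2 + p.2^2)/lam by ring]
  rw [integral_congr_ae (ae_of_all _ hpt)]
  have := polar_calc (τ := τ) (c := c) hlam hτpos hc
  rw [hfdef] at *
  rw [this]
end

section
/- Let s ∈ ℂ, κ, λ, λ₀ > 0, P > 0. Set τ = √(κλ₀(1+κλ)), τ̃ = (1+κλ)√P, and τ̂ = max{(1+κλ)√P, (1+κλ)√P/2 + κλ₀/(2√P)}. Consider g(v) = |v − s|² + κλ|v|² + κλ₀·1{v ≠ 0} on the disc D = {v ∈ ℂ : |v| ≤ √P}. Then: (i) if |s| < τ, the unique minimizer is v = 0; (ii) if τ < |s| < τ̃, the unique minimizer is v = s/(1+κλ); (iii) if τ̃ ≤ |s| < τ̂, the unique minimizer is v = 0; (iv) if |s| > τ̂, the unique minimizer is v = √P·s/|s|. -/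
lemma aux_key (s v : ℂ) (a : ℝ) (ha : a ≠ 0) :
    ‖v - s‖ ^ 2 + (a - 1) * ‖v‖ ^ 2
      = a * ‖v - s / (a:ℂ)‖ ^ 2 + (a - 1) / a * ‖s‖ ^ 2 := by
  simp only [Complex.sq_norm, Complex.normSq_apply, Complex.sub_re, Complex.sub_im,
    Complex.div_re, Complex.div_im, Complex.ofReal_re, Complex.ofReal_im,
    Complex.normSq_apply]
  field_simp
  ring

lemma aux_expand (v c : ℂ) :
    ‖v - c‖ ^ 2
      = ‖v‖ ^ 2 - 2 * (v * (starRingEnd ℂ) c).re + ‖c‖ ^ 2 := by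
  simp only [Complex.sq_norm, Complex.normSq_apply, Complex.sub_re, Complex.sub_im,
    Complex.mul_re, Complex.conj_re, Complex.conj_im]
  ring

lemma aux_re_le (v c : ℂ) : (v * (starRingEnd ℂ) c).re ≤ ‖v‖ * ‖c‖ := by
  have := Complex.re_le_norm (v * (starRingEnd ℂ) c)
  rwa [norm_mul, Complex.norm_conj] at this

lemma aux_eq (v c : ℂ) (hc : c ≠ 0)
    (h : (v * (starRingEnd ℂ) c).re = ‖v‖ * ‖c‖) :
    v = ((‖v‖ : ℝ) : ℂ) * c / ((‖c‖ : ℝ) : ℂ) := by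
  have habs : ‖v * (starRingEnd ℂ) c‖ = ‖v‖ * ‖c‖ := by
    rw [norm_mul, Complex.norm_conj]
  have hz : v * (starRingEnd ℂ) c = ((‖v‖ * ‖c‖ : ℝ) : ℂ) := by
    apply Complex.ext
    · simpa using h
    · have h2 := Complex.sq_norm (v * (starRingEnd ℂ) c)
      rw [Complex.normSq_apply, habs, ← h] at h2
      simp only [Complex.ofReal_im]
      have him : (v * (starRingEnd ℂ) c).im * (v * (starRingEnd ℂ) c).im = 0 := by
        nlinarith [h2]
      exact mul_self_eq_zero.mp him
  have hc' : ((‖c‖ : ℝ) : ℂ) ≠ 0 := by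
    exact_mod_cast ne_of_gt (norm_pos_iff.mpr hc)
  have h3 : v * ((starRingEnd ℂ) c * c) = ((‖v‖ * ‖c‖ : ℝ) : ℂ) * c := by
    rw [← mul_assoc, hz]
  have h4 : (starRingEnd ℂ) c * c = ((‖c‖ : ℝ) : ℂ) ^ 2 := by
    rw [mul_comm, Complex.mul_conj, ← Complex.sq_norm]
    push_cast
    ring
  rw [h4] at h3
  field_simp
  apply mul_right_cancel₀ hc'
  push_cast at h3 ⊢
  linear_combination h3

set_option maxHeartbeats 2000000 in
/-- Two-step hard thresholding: for `s ∈ ℂ`, `κ, λ, λ₀, P > 0`,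
`τ = √(κλ₀(1+κλ))`, `τ̃ = (1+κλ)√P`, `τ̂ = max{(1+κλ)√P, (1+κλ)√P/2 + κλ₀/(2√P)}`,
the function `g(v) = |v − s|² + κλ|v|² + κλ₀·1{v ≠ 0}` on the disc
`D = {v : |v| ≤ √P}` has the unique minimizer: `0` if `|s| < τ`; `s/(1+κλ)` if
`τ < |s| < τ̃`; `0` if `τ̃ ≤ |s| < τ̂`; and `√P·s/|s|` if `|s| > τ̂`. -/
theorem papr_tas_minimizer (s : ℂ) (κ lam lam0 P τ τt τh : ℝ)
    (hκ : 0 < κ) (hlam : 0 < lam) (hlam0 : 0 < lam0) (hP : 0 < P)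
    (hτ : τ = Real.sqrt (κ * lam0 * (1 + κ * lam)))
    (hτt : τt = (1 + κ * lam) * Real.sqrt P)
    (hτh : τh = max ((1 + κ * lam) * Real.sqrt P)
      ((1 + κ * lam) / 2 * Real.sqrt P + κ * lam0 / (2 * Real.sqrt P))) :
    let g : ℂ → ℝ := fun v =>
      ‖v - s‖ ^ 2 + κ * lam * ‖v‖ ^ 2 +
        κ * lam0 * (if v = 0 then 0 else 1)
    let D : Set ℂ := {v | ‖v‖ ≤ Real.sqrt P}
    let uniqueMinOn : ℂ → Prop := fun v₀ =>
      v₀ ∈ D ∧ (∀ v ∈ D, g v₀ ≤ g v) ∧ (∀ v ∈ D, (∀ w ∈ D, g v ≤ g w) → v = v₀)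
    (‖s‖ < τ → uniqueMinOn 0) ∧
    (τ < ‖s‖ → ‖s‖ < τt →
      uniqueMinOn (s / ((1 + κ * lam : ℝ) : ℂ))) ∧
    (τt ≤ ‖s‖ → ‖s‖ < τh → uniqueMinOn 0) ∧
    (τh < ‖s‖ →
      uniqueMinOn ((Real.sqrt P : ℂ) * s / ((‖s‖ : ℝ) : ℂ))) := by
  intro g D uniqueMinOn
  set p : ℝ := Real.sqrt P with hp
  set A : ℝ := 1 + κ * lam with hA
  have hA1 : 1 < A := by rw [hA]; nlinarith
  have hA0 : (0:ℝ) < A := lt_trans one_pos hA1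
  have hsP : 0 < p := Real.sqrt_pos.mpr hP
  have hPsq : p ^ 2 = P := Real.sq_sqrt hP.le
  set r : ℝ := ‖s‖ with hr
  have hr0 : 0 ≤ r := norm_nonneg s
  set c : ℂ := s / ((A : ℝ) : ℂ) with hc
  have hcabs : ‖c‖ = r / A := by
    rw [hc, norm_div, Complex.norm_real, Real.norm_eq_abs, abs_of_pos hA0]
  have hg0 : g 0 = r ^ 2 := by simp [g, hr]
  have hgne : ∀ v : ℂ, v ≠ 0 →
      g v = A * ‖v - c‖ ^ 2 + (A - 1) / A * r ^ 2 + κ * lam0 := by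
    intro v hv
    have hk := aux_key s v A (ne_of_gt hA0)
    simp only [g, if_neg hv, mul_one]
    have hA' : κ * lam = A - 1 := by rw [hA]; ring
    rw [hA', hc]
    linarith [hk]
  have hgneA : ∀ v : ℂ, v ≠ 0 → κ * lam = A - 1 := fun _ _ => by rw [hA]; ring
  have hA'' : κ * lam = A - 1 := by rw [hA]; ring
  clear_value p A r c
  have hq : (A - 1) / A * r ^ 2 = r ^ 2 - r ^ 2 / A := by
    field_simp
  have hid : A * (r / A - p) ^ 2 + (A - 1) / A * r ^ 2
      = (r - p) ^ 2 + (A - 1) * P := by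
    rw [← hPsq]; field_simp; ring
  have hexp : (r - p) ^ 2 = r ^ 2 - 2 * p * r + P := by
    rw [← hPsq]; ring
  have build : ∀ v₀, v₀ ∈ D → (∀ v ∈ D, v ≠ v₀ → g v₀ < g v) → uniqueMinOn v₀ := by
    intro v₀ h₀ hs
    refine ⟨h₀, ?_, ?_⟩
    · intro v hv
      by_cases h : v = v₀
      · rw [h]
      · exact (hs v hv h).le
    · intro v hv hmin
      by_contra h
      exact absurd (hmin v₀ h₀) (not_le.mpr (hs v hv h))
  have hτsq : τ ^ 2 = κ * lam0 * A := by
    rw [hτ, Real.sq_sqrt (by positivity)]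
  have heq2P : 2 * p *
      (A / 2 * p + κ * lam0 / (2 * p)) = A * P + κ * lam0 := by
    rw [← hPsq]; field_simp
  refine ⟨?_, ?_, ?_, ?_⟩
  · -- case (i)
    intro h1
    have hs2 : r ^ 2 < κ * lam0 * A := by
      calc r ^ 2 < τ ^ 2 := by
            apply pow_lt_pow_left₀ h1 hr0
            norm_num
        _ = κ * lam0 * A := hτsq
    apply build 0 (by simp [D, hsP.le])
    intro v hv hvne
    rw [hg0, hgne v hvne]
    have hsq : 0 ≤ ‖v - c‖ ^ 2 := sq_nonneg _
    have hq2 : r ^ 2 / A < κ * lam0 := by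
      rw [div_lt_iff₀ hA0]; nlinarith [hs2]
    have hAsq : 0 ≤ A * ‖v - c‖ ^ 2 := mul_nonneg hA0.le hsq
    linarith [hq, hq2, hAsq]
  · -- case (ii)
    intro h1 h2
    have hτpos : 0 < τ := by rw [hτ]; positivity
    have hrpos : 0 < r := lt_trans hτpos h1
    have hsne : s ≠ 0 := by
      intro h
      rw [hr, h, norm_zero] at hrpos
      exact lt_irrefl 0 hrpos
    have hcne : c ≠ 0 := by
      rw [hc]
      exact div_ne_zero hsne (by exact_mod_cast ne_of_gt hA0)
    have hs2 : κ * lam0 * A < r ^ 2 := by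
      calc κ * lam0 * A = τ ^ 2 := hτsq.symm
        _ < r ^ 2 := by apply pow_lt_pow_left₀ h1 hτpos.le; norm_num
    have hmem : c ∈ D := by
      simp only [D, Set.mem_setOf_eq]
      rw [hcabs, div_le_iff₀ hA0]
      rw [hτt] at h2
      nlinarith [h2]
    apply build c hmem
    intro v hv hvne
    by_cases hv0 : v = 0
    · rw [hv0, hg0, hgne c hcne, sub_self]
      simp only [norm_zero]
      have hq2 : κ * lam0 < r ^ 2 / A := by
        rw [lt_div_iff₀ hA0]; nlinarith [hs2]
      nlinarith [hq, hq2]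
    · rw [hgne v hv0, hgne c hcne, sub_self]
      simp only [norm_zero]
      have hpos : 0 < ‖v - c‖ := norm_pos_iff.mpr (sub_ne_zero.mpr hvne)
      have hm := mul_pos hA0 (pow_pos hpos 2)
      nlinarith [hm]
  · -- case (iii)
    intro h1 h2
    have h2' : r < A / 2 * p + κ * lam0 / (2 * p) := by
      rw [hτh] at h2
      rcases lt_max_iff.mp h2 with h | h
      · rw [hτt] at h1; exact absurd h (not_lt.mpr h1)
      · exact h
    have h1' : A * p ≤ r := by rw [hτt] at h1; exact h1
    have h2'' : 2 * p * r < A * P + κ * lam0 := by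
      have hmul := mul_lt_mul_of_pos_left h2' (show (0:ℝ) < 2 * p by positivity)
      rw [heq2P] at hmul
      exact hmul
    apply build 0 (by simp [D, hsP.le])
    intro v hv hvne
    rw [hg0, hgne v hvne]
    have hm0 : 0 ≤ r / A - p := by
      rw [sub_nonneg, le_div_iff₀ hA0]
      nlinarith [h1']
    have hlb : r / A - p ≤ ‖v - c‖ := by
      have h3 := norm_sub_norm_le c v
      rw [show (c - v) = -(v - c) by ring, norm_neg] at h3
      have hvle : ‖v‖ ≤ p := by
        have := hv
        simp only [D, Set.mem_setOf_eq, ← hp] at this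
        exact this
      rw [hcabs] at h3
      linarith
    have hsqle : (r / A - p) ^ 2 ≤ ‖v - c‖ ^ 2 :=
      pow_le_pow_left₀ hm0 hlb 2
    have hmulle := mul_le_mul_of_nonneg_left hsqle hA0.le
    linarith [hmulle, hid, h2'', hexp]
  · -- case (iv)
    intro h1
    rw [hτh] at h1
    have h1' : A * p < r := lt_of_le_of_lt (le_max_left _ _) h1
    have h2 : A / 2 * p + κ * lam0 / (2 * p) < r :=
      lt_of_le_of_lt (le_max_right _ _) h1
    have hrpos : 0 < r := lt_trans (by positivity) h1'
    have hsne : s ≠ 0 := by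
      intro h
      rw [hr, h, norm_zero] at hrpos
      exact lt_irrefl 0 hrpos
    have hcne : c ≠ 0 := by
      rw [hc]
      exact div_ne_zero hsne (by exact_mod_cast ne_of_gt hA0)
    have hrC : ((r : ℝ) : ℂ) ≠ 0 := by exact_mod_cast ne_of_gt hrpos
    have hAC : ((A : ℝ) : ℂ) ≠ 0 := by exact_mod_cast ne_of_gt hA0
    have hsPr : p < r := by nlinarith [h1', hA1, hsP]
    have hv₀abs : ‖(p : ℂ) * s / ((r : ℝ) : ℂ)‖ = p := by
      rw [norm_div, norm_mul, Complex.norm_real, Real.norm_eq_abs, Complex.norm_real, Real.norm_eq_abs,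
        abs_of_nonneg hsP.le, abs_of_pos hrpos, ← hr]
      field_simp
    have hv₀ne : (p : ℂ) * s / ((r : ℝ) : ℂ) ≠ 0 := by
      intro h
      rw [h, norm_zero] at hv₀abs
      exact (ne_of_gt hsP) hv₀abs.symm
    have hsub : (p : ℂ) * s / ((r : ℝ) : ℂ) - s
        = (((p - r) / r : ℝ) : ℂ) * s := by
      push_cast
      field_simp
    have habs1 : ‖(p : ℂ) * s / ((r : ℝ) : ℂ) - s‖ = r - p := by
      rw [hsub, norm_mul, Complex.norm_real, Real.norm_eq_abs, ← hr,
        abs_of_nonpos (by apply div_nonpos_of_nonpos_of_nonneg <;> linarith)]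
      field_simp
      ring
    have hgv₀ : g ((p : ℂ) * s / ((r : ℝ) : ℂ))
        = (r - p) ^ 2 + (A - 1) * P + κ * lam0 := by
      simp only [g, if_neg hv₀ne, mul_one, habs1, hv₀abs, hPsq]
      rw [hA'']
    have h2'' : A * P + κ * lam0 < 2 * p * r := by
      have hmul := mul_lt_mul_of_pos_left h2 (show (0:ℝ) < 2 * p by positivity)
      rw [heq2P] at hmul
      exact hmul
    apply build _ (by
      simp only [D, Set.mem_setOf_eq, ← hp]
      exact le_of_eq hv₀abs)
    intro v hv hvne
    rw [hgv₀]
    by_cases hv0 : v = 0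
    · rw [hv0, hg0]
      linarith [hexp, h2'', hA0]
    · rw [hgne v hv0]
      have hcgt : p < ‖c‖ := by
        rw [hcabs, lt_div_iff₀ hA0]
        nlinarith [h1']
      suffices hgt : (r / A - p) ^ 2 < ‖v - c‖ ^ 2 by
        have hmul := mul_lt_mul_of_pos_left hgt hA0
        linarith [hid, hmul]
      have hexp2 := aux_expand v c
      have hre := aux_re_le v c
      have hb0 : 0 ≤ ‖v‖ := norm_nonneg v
      have hble : ‖v‖ ≤ p := by
        have := hv
        simp only [D, Set.mem_setOf_eq, ← hp] at this
        exact this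
      rw [← hcabs]
      have hgexp : (‖c‖ - p) ^ 2
          = ‖c‖ ^ 2 - 2 * p * ‖c‖ + p ^ 2 := by ring
      rcases lt_or_eq_of_le hble with hblt | hbeq
      · have hkey : 0 < (p - ‖v‖) * (2 * ‖c‖ - p - ‖v‖) :=
          mul_pos (by linarith) (by linarith)
        have hkey2 : (p - ‖v‖) * (2 * ‖c‖ - p - ‖v‖)
            = 2 * p * ‖c‖ - p ^ 2 - 2 * (‖v‖ * ‖c‖)
              + ‖v‖ ^ 2 := by ring
        linarith only [hexp2, hre, hkey, hkey2, hgexp]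
      · have hneq : (v * (starRingEnd ℂ) c).re ≠ ‖v‖ * ‖c‖ := by
          intro heq
          apply hvne
          rw [aux_eq v c hcne heq, hbeq, hcabs, hc]
          push_cast
          field_simp
        have hlt : (v * (starRingEnd ℂ) c).re < ‖v‖ * ‖c‖ :=
          lt_of_le_of_ne hre hneq
        rw [hbeq] at hexp2 hlt
        linarith only [hexp2, hlt, hgexp]
end

section
/- Let s ~ CN(0, λ) with λ > 0, let κ, λₚ, λ₀, P > 0, and set τ = √(κλ₀(1+κλₚ)), τ̃ = (1+κλₚ)√P, τ̂ = max{τ̃, (1+κλₚ)√P/2 + κλ₀/(2√P)}, and assume τ ≤ τ̃. Define x = √P·s/|s| if |s| ≥ τ̂, x = 0 if τ̃ ≤ |s| < τ̂, x = s/(1+κλₚ) if τ ≤ |s| < τ̃, and x = 0 if |s| < τ. Then E[|x|²] = Ξ/(1+κλₚ)² + P·e^{−τ̂²/λ}, where Ξ = (λ + τ²)·e^{−τ²/λ} − (λ + τ̃²)·e^{−τ̃²/λ}. -/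
open MeasureTheory ProbabilityTheory
open scoped ENNReal NNReal

open Real Set in
lemma gaussianAux_hasDerivAt1 (lam : ℝ) (hlam : lam ≠ 0) (r : ℝ) :
    HasDerivAt (fun r => (r ^ 2 + lam) * Real.exp (-r ^ 2 / lam))
      (-(2 / lam) * r ^ 3 * Real.exp (-r ^ 2 / lam)) r := by
  have h1 : HasDerivAt (fun r : ℝ => r ^ 2 + lam) (2 * r) r := by
    simpa using (hasDerivAt_pow 2 r).add_const lam
  have h2 : HasDerivAt (fun r : ℝ => -r ^ 2 / lam) (-(2 * r) / lam) r := by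
    simpa using ((hasDerivAt_pow 2 r).neg.div_const lam)
  have := h1.mul h2.exp
  refine this.congr_deriv ?_
  field_simp
  ring

open Real Set in
lemma gaussianAux_hasDerivAt2 (lam : ℝ) (hlam : lam ≠ 0) (r : ℝ) :
    HasDerivAt (fun r => -(lam / 2) * Real.exp (-r ^ 2 / lam))
      (r * Real.exp (-r ^ 2 / lam)) r := by
  have h2 : HasDerivAt (fun r : ℝ => -r ^ 2 / lam) (-(2 * r) / lam) r := by
    simpa using ((hasDerivAt_pow 2 r).neg.div_const lam)
  have := (h2.exp).const_mul (-(lam / 2))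
  refine this.congr_deriv ?_
  field_simp

open Real Set in
lemma complexGaussian_eq (lam : ℝ) (hlam : 0 < lam) :
    complexGaussian lam = (volume : Measure (ℝ × ℝ)).withDensity
      (fun p => gaussianPDF 0 (Real.toNNReal (lam / 2)) p.1
        * gaussianPDF 0 (Real.toNNReal (lam / 2)) p.2) := by
  have hv : (Real.toNNReal (lam / 2)) ≠ 0 := by
    simp only [ne_eq, Real.toNNReal_eq_zero, not_le]
    linarith
  refine Measure.prod_eq fun s t hs ht => ?_
  rw [withDensity_apply _ (hs.prod ht), gaussianReal_apply _ hv, gaussianReal_apply _ hv,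
    Measure.volume_eq_prod, ← Measure.prod_restrict,
    lintegral_prod_mul (measurable_gaussianPDF _ _).aemeasurable
      (measurable_gaussianPDF _ _).aemeasurable]

open Real Set in
lemma gaussianAux_density_eq {lam : ℝ} (hlam : 0 < lam) (x : ℝ) :
    gaussianPDFReal 0 (Real.toNNReal (lam / 2)) x
      = (Real.sqrt (π * lam))⁻¹ * Real.exp (-x ^ 2 / lam) := by
  rw [gaussianPDFReal]
  rw [Real.coe_toNNReal _ (by linarith : (0:ℝ) ≤ lam / 2)]
  norm_num
  ring_nf

open Real Set in
lemma integral_complexGaussian {lam : ℝ} (hlam : 0 < lam) (F : ℝ × ℝ → ℝ) :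
    ∫ p, F p ∂(complexGaussian lam)
      = ∫ p : ℝ × ℝ, ((π * lam)⁻¹ * Real.exp (-(p.1 ^ 2 + p.2 ^ 2) / lam)) * F p := by
  have hs : (Real.sqrt (π * lam))⁻¹ * (Real.sqrt (π * lam))⁻¹ = (π * lam)⁻¹ := by
    rw [← mul_inv, Real.mul_self_sqrt (by positivity)]
  have hd : (fun p : ℝ × ℝ => gaussianPDF 0 (Real.toNNReal (lam / 2)) p.1
        * gaussianPDF 0 (Real.toNNReal (lam / 2)) p.2)
      = fun p : ℝ × ℝ =>
        ((Real.toNNReal ((π * lam)⁻¹ * Real.exp (-(p.1 ^ 2 + p.2 ^ 2) / lam)) : ℝ≥0) : ℝ≥0∞) := by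
    funext p
    rw [gaussianPDF, gaussianPDF, ← ENNReal.ofReal_mul (gaussianPDFReal_nonneg _ _ _)]
    rw [gaussianAux_density_eq hlam, gaussianAux_density_eq hlam]
    rw [show -(p.1 ^ 2 + p.2 ^ 2) / lam = -p.1 ^ 2 / lam + -p.2 ^ 2 / lam by ring, Real.exp_add,
      ← hs]
    rw [ENNReal.ofReal]
    congr 1
    ring
  rw [complexGaussian_eq lam hlam, hd, integral_withDensity_eq_integral_smul]
  · congr 1
    funext p
    rw [NNReal.smul_def, Real.coe_toNNReal _ (by positivity), smul_eq_mul]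
  · exact (measurable_const.mul
      (((continuous_fst.pow 2).add (continuous_snd.pow 2)).neg.div_const
        lam).rexp.measurable).real_toNNReal

open Real Set in
/-- For `s ~ CN(0, λ)`, `κ, λₚ, λ₀, P > 0`, thresholds
`τ = √(κλ₀(1+κλₚ))`, `τ̃ = (1+κλₚ)√P`, `τ̂ = max{τ̃, (1+κλₚ)√P/2 + κλ₀/(2√P)}`
with `τ ≤ τ̃`, the two-step hard-thresholded variable `x` satisfies
`E[|x|²] = Ξ/(1+κλₚ)² + P·e^{−τ̂²/λ}` where
`Ξ = (λ + τ²)·e^{−τ²/λ} − (λ + τ̃²)·e^{−τ̃²/λ}`. -/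
theorem expectation_sq_two_step (lam κ lamp lam0 P τ τt τh : ℝ)
    (hlam : 0 < lam) (hκ : 0 < κ) (hlamp : 0 < lamp) (hlam0 : 0 < lam0) (hP : 0 < P)
    (hτ : τ = Real.sqrt (κ * lam0 * (1 + κ * lamp)))
    (hτt : τt = (1 + κ * lamp) * Real.sqrt P)
    (hτh : τh = max τt
      ((1 + κ * lamp) / 2 * Real.sqrt P + κ * lam0 / (2 * Real.sqrt P)))
    (hττt : τ ≤ τt) :
    let x : ℝ × ℝ → ℂ := fun p =>
      if τh ≤ ‖toC p‖ then
        (Real.sqrt P : ℂ) * toC p / ((‖toC p‖ : ℝ) : ℂ)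
      else if τt ≤ ‖toC p‖ then 0
      else if τ ≤ ‖toC p‖ then toC p / ((1 + κ * lamp : ℝ) : ℂ)
      else 0
    let Ξ : ℝ := (lam + τ ^ 2) * Real.exp (-(τ ^ 2) / lam)
      - (lam + τt ^ 2) * Real.exp (-(τt ^ 2) / lam)
    (∫ p : ℝ × ℝ, ‖x p‖ ^ 2 ∂(complexGaussian lam))
      = Ξ / (1 + κ * lamp) ^ 2 + P * Real.exp (-(τh ^ 2) / lam) := by
  intro x Ξ
  have ha0 : 0 < 1 + κ * lamp := by positivity
  set a : ℝ := 1 + κ * lamp with ha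
  have hτ0 : 0 < τ := by
    rw [hτ]; exact Real.sqrt_pos.mpr (by positivity)
  have hτtτh : τt ≤ τh := hτh ▸ le_max_left _ _
  have hτt0 : 0 < τt := lt_of_lt_of_le hτ0 hττt
  have hτh0 : 0 < τh := lt_of_lt_of_le hτt0 hτtτh
  set c : ℝ := (π * lam)⁻¹ with hc
  set h : ℝ → ℝ := fun r => if τh ≤ r then P else if τt ≤ r then 0
    else if τ ≤ r then r ^ 2 / a ^ 2 else 0 with hh
  have habs : ∀ p : ℝ × ℝ, ‖toC p‖ = Real.sqrt (p.1 ^ 2 + p.2 ^ 2) := by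
    intro p
    rw [toC, Complex.norm_def, Complex.normSq_add_mul_I]
  have hxabs : ∀ (r : ℝ), 0 < r → ∀ p : ℝ × ℝ, ‖toC p‖ = r →
      ‖x p‖ ^ 2 = h r := by
    intro r hr p hp
    simp only [x, h, hp]
    split_ifs with h1 h2 h3
    · rw [norm_div, norm_mul, Complex.norm_real, Complex.norm_real, Real.norm_eq_abs,
        Real.norm_eq_abs, hp,
        abs_of_nonneg (Real.sqrt_nonneg P), abs_of_pos hr]
      rw [mul_div_assoc, div_self hr.ne', mul_one, Real.sq_sqrt hP.le]
    · simp
    · rw [norm_div, Complex.norm_real, Real.norm_eq_abs, hp, abs_of_pos ha0, div_pow]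
    · simp
  rw [integral_complexGaussian hlam, ← integral_comp_polarCoord_symm]
  have hpolar : EqOn
      (fun p : ℝ × ℝ => p.1 • (c * Real.exp (-((polarCoord.symm p).1 ^ 2
          + (polarCoord.symm p).2 ^ 2) / lam) * ‖x (polarCoord.symm p)‖ ^ 2))
      (fun p : ℝ × ℝ => (fun r => r * (c * Real.exp (-r ^ 2 / lam)) * h r) p.1
        * (fun _ : ℝ => (1:ℝ)) p.2) polarCoord.target := by
    rintro ⟨r, θ⟩ hp
    rw [polarCoord_target] at hp
    have hr : 0 < r := hp.1
    have hsq : (polarCoord.symm (r, θ)).1 ^ 2 + (polarCoord.symm (r, θ)).2 ^ 2 = r ^ 2 := by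
      rw [polarCoord_symm_apply]
      dsimp only
      nlinarith [sin_sq_add_cos_sq θ]
    have habs' : ‖toC (polarCoord.symm (r, θ))‖ = r := by
      rw [habs, hsq, Real.sqrt_sq hr.le]
    simp only
    rw [hxabs r hr _ habs', hsq, smul_eq_mul]
    ring
  rw [setIntegral_congr_fun (polarCoord.open_target.measurableSet) hpolar, polarCoord_target,
    Measure.volume_eq_prod,
    MeasureTheory.setIntegral_prod_mul (fun r => r * (c * Real.exp (-r ^ 2 / lam)) * h r)
      (fun _ : ℝ => (1:ℝ)) (Ioi 0) (Ioo (-π) π)]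
  have hθint : (∫ _ in Ioo (-π) π, (1:ℝ)) = 2 * π := by
    rw [setIntegral_const, measureReal_def, Real.volume_Ioo, smul_eq_mul, mul_one,
      ENNReal.toReal_ofReal (by linarith [pi_pos])]
    ring
  rw [hθint]
  set g1 : ℝ → ℝ := fun r => c * (r ^ 3 / a ^ 2) * Real.exp (-r ^ 2 / lam) with hg1
  set g2 : ℝ → ℝ := fun r => (c * P) * (r * Real.exp (-r ^ 2 / lam)) with hg2
  have hsplit : EqOn (fun r : ℝ => r * (c * Real.exp (-r ^ 2 / lam)) * h r)
      (fun r => (Ico τ τt).indicator g1 r + (Ici τh).indicator g2 r) (Ioi 0) := by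
    intro r hr
    simp only [h]
    rcases le_or_gt τh r with h1 | h1
    · rw [if_pos h1,
        indicator_of_notMem
          (show r ∉ Ico τ τt from fun hm => absurd hm.2 (not_lt.mpr (le_trans hτtτh h1))),
        indicator_of_mem (show r ∈ Ici τh from h1)]
      simp only [g2]; ring
    · rcases le_or_gt τt r with h2 | h2
      · rw [if_neg (not_le.mpr h1), if_pos h2,
          indicator_of_notMem (show r ∉ Ico τ τt from fun hm => absurd hm.2 (not_lt.mpr h2)),
          indicator_of_notMem (show r ∉ Ici τh from fun hm => absurd hm (not_le.mpr h1))]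
        ring
      · rcases le_or_gt τ r with h3 | h3
        · rw [if_neg (not_le.mpr h1), if_neg (not_le.mpr h2), if_pos h3,
            indicator_of_mem (show r ∈ Ico τ τt from ⟨h3, h2⟩),
            indicator_of_notMem (show r ∉ Ici τh from fun hm => absurd hm (not_le.mpr h1))]
          simp only [g1]; ring
        · rw [if_neg (not_le.mpr h1), if_neg (not_le.mpr h2), if_neg (not_le.mpr h3),
            indicator_of_notMem (show r ∉ Ico τ τt from fun hm => absurd hm.1 (not_le.mpr h3)),
            indicator_of_notMem (show r ∉ Ici τh from fun hm => absurd hm (not_le.mpr h1))]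
          ring
  rw [setIntegral_congr_fun measurableSet_Ioi hsplit]
  have hcont1 : Continuous g1 := by fun_prop
  have hcont2 : Continuous g2 := by fun_prop
  have hint1 : IntegrableOn g1 (Ico τ τt) :=
    (hcont1.integrableOn_Icc).mono_set Ico_subset_Icc_self
  have hint2 : IntegrableOn g2 (Ici τh) := by
    have hI := (integrable_mul_exp_neg_mul_sq (b := lam⁻¹) (by positivity)).const_mul (c * P)
    have heq : (fun r : ℝ => (c * P) * (r * Real.exp (-lam⁻¹ * r ^ 2))) = g2 := by
      funext r; rw [show -lam⁻¹ * r ^ 2 = -r ^ 2 / lam by ring]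
    exact (heq ▸ hI).integrableOn
  rw [integral_add ((hint1.integrable_indicator measurableSet_Ico).integrableOn)
    ((hint2.integrable_indicator measurableSet_Ici).integrableOn)]
  rw [setIntegral_indicator measurableSet_Ico, setIntegral_indicator measurableSet_Ici,
    inter_eq_self_of_subset_right
      (show Ico τ τt ⊆ Ioi 0 from fun r hr => lt_of_lt_of_le hτ0 hr.1),
    inter_eq_self_of_subset_right
      (show Ici τh ⊆ Ioi 0 from fun r hr => lt_of_lt_of_le hτh0 hr)]
  have hA1 : (∫ r in Ico τ τt, g1 r)
      = (c / a ^ 2) * (-(lam / 2)) * ((τt ^ 2 + lam) * Real.exp (-τt ^ 2 / lam)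
        - (τ ^ 2 + lam) * Real.exp (-τ ^ 2 / lam)) := by
    rw [integral_Ico_eq_integral_Ioo, ← integral_Ioc_eq_integral_Ioo,
      ← intervalIntegral.integral_of_le hττt]
    have hder : ∀ r ∈ uIcc τ τt,
        HasDerivAt (fun r => (c / a ^ 2) * (-(lam / 2)) * ((r ^ 2 + lam)
          * Real.exp (-r ^ 2 / lam))) (g1 r) r := by
      intro r _
      have := (gaussianAux_hasDerivAt1 lam hlam.ne' r).const_mul ((c / a ^ 2) * (-(lam / 2)))
      refine this.congr_deriv ?_
      simp only [g1]
      field_simp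
    rw [intervalIntegral.integral_eq_sub_of_hasDerivAt hder (hcont1.intervalIntegrable _ _)]
    ring
  have hA2 : (∫ r in Ici τh, g2 r) = (c * P) * (lam / 2) * Real.exp (-τh ^ 2 / lam) := by
    rw [integral_Ici_eq_integral_Ioi]
    have hder : ∀ r ∈ Ioi τh,
        HasDerivAt (fun r => (c * P) * (-(lam / 2) * Real.exp (-r ^ 2 / lam))) (g2 r) r := by
      intro r _
      have := (gaussianAux_hasDerivAt2 lam hlam.ne' r).const_mul (c * P)
      exact this
    have htend0 : Filter.Tendsto (fun r : ℝ => Real.exp (-r ^ 2 / lam))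
        Filter.atTop (nhds 0) := by
      apply Real.tendsto_exp_atBot.comp
      have hsq : Filter.Tendsto (fun r : ℝ => r ^ 2) Filter.atTop Filter.atTop :=
        Filter.tendsto_pow_atTop two_ne_zero
      have := hsq.atTop_mul_const_of_neg (show -lam⁻¹ < 0 from neg_neg_of_pos (by positivity))
      exact this.congr (fun r => by ring)
    have htend : Filter.Tendsto (fun r : ℝ => (c * P) * (-(lam / 2) * Real.exp (-r ^ 2 / lam)))
        Filter.atTop (nhds 0) := by
      have h2 := htend0.const_mul ((c * P) * -(lam / 2))
      rw [mul_zero] at h2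
      exact h2.congr (fun r => by ring)
    rw [integral_Ioi_of_hasDerivAt_of_tendsto
      (Continuous.continuousWithinAt (by fun_prop)) hder
      (hint2.mono_set Ioi_subset_Ici_self) htend]
    ring
  rw [hA1, hA2]
  simp only [Ξ]
  rw [hc]
  have hπ : π ≠ 0 := pi_ne_zero
  field_simp
  ring
end

section
/- Let k, m be positive integers, λ_s > 0, β > 0, let s be a ℂ^k-valued random vector with independent CN(0, λ_s) entries, and let u_1, …, u_m ∈ ℂ^k be fixed vectors. Then E[ Π_{a=1}^m e^{−β‖u_a − s‖²} ] = (1 + λ_s·β·m)^{−k} · exp( −β · Σ_{a=1}^m Σ_{b=1}^m ξ_{ab} · ⟨u_a, u_b⟩ ), where ξ_{ab} = δ_{ab} − λ_s·β/(1 + λ_s·β·m), δ_{ab} is the Kronecker delta, and ⟨u_a, u_b⟩ = u_aᴴ u_b denotes the Hermitian inner product (note Σ_{a,b} ξ_{ab}⟨u_a,u_b⟩ is real). -/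
open MeasureTheory ProbabilityTheory

section Aux
open Real Complex NNReal ENNReal

lemma integral_rexp_quadratic {A : ℝ} (hA : 0 < A) (B C : ℝ) :
    ∫ x : ℝ, Real.exp (-A * x ^ 2 + B * x + C)
      = Real.sqrt (π / A) * Real.exp (C + B ^ 2 / (4 * A)) := by
  have h1 : (-(A:ℂ)).re < 0 := by simpa using hA
  have h2 := integral_cexp_quadratic h1 (B:ℂ) (C:ℂ)
  have h3 : ∀ x : ℝ, -(A:ℂ) * (x:ℂ)^2 + (B:ℂ)*(x:ℂ) + (C:ℂ)
      = ((-A * x^2 + B*x + C : ℝ) : ℂ) := by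
    intro x; push_cast; ring
  have lhs : ((∫ x : ℝ, Real.exp (-A*x^2+B*x+C) : ℝ) : ℂ)
      = ∫ x : ℝ, Complex.exp (-(A:ℂ)*(x:ℂ)^2 + (B:ℂ)*(x:ℂ) + (C:ℂ)) := by
    simp_rw [h3, ← Complex.ofReal_exp]
    exact integral_ofReal.symm
  have h4 : ((π/A : ℝ) : ℂ)^(1/2 : ℂ) = ((Real.sqrt (π/A) : ℝ) : ℂ) := by
    rw [Real.sqrt_eq_rpow]
    rw [Complex.ofReal_cpow (by positivity) (1/2 : ℝ)]
    norm_num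
  have h5 : (C:ℂ) - (B:ℂ)^2/(4 * -(A:ℂ)) = ((C + B^2/(4*A) : ℝ) : ℂ) := by
    push_cast
    rw [mul_neg, div_neg]
    ring
  apply Complex.ofReal_injective
  rw [lhs, h2, neg_neg, h5]
  push_cast [← h4]
  ring

lemma integral_gaussianReal_eq {v : ℝ≥0} (hv : v ≠ 0) (g : ℝ → ℝ) :
    ∫ x, g x ∂(gaussianReal 0 v) = ∫ x, gaussianPDFReal 0 v x * g x := by
  rw [gaussianReal_of_var_ne_zero _ hv, gaussianPDF_def]
  have : (fun x => ENNReal.ofReal (gaussianPDFReal 0 v x))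
      = fun x => ((Real.toNNReal (gaussianPDFReal 0 v x) : ℝ≥0) : ℝ≥0∞) := rfl
  rw [this, integral_withDensity_eq_integral_smul
    ((measurable_gaussianPDFReal 0 v).real_toNNReal)]
  refine integral_congr_ae (Filter.Eventually.of_forall fun x => ?_)
  simp [NNReal.smul_def, Real.coe_toNNReal _ (gaussianPDFReal_nonneg 0 v x)]

lemma gauss1d {m : ℕ} {lams β : ℝ} (hls : 0 < lams) (hβ : 0 < β) (c : Fin m → ℝ) :
    ∫ x, Real.exp (-β * ∑ a, (c a - x)^2) ∂(gaussianReal 0 (Real.toNNReal (lams / 2)))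
      = (Real.sqrt (1 + lams*β*m))⁻¹
        * Real.exp (β^2*lams*(∑ a, c a)^2/(1 + lams*β*m) - β * ∑ a, (c a)^2) := by
  have hv : Real.toNNReal (lams/2) ≠ 0 := by
    simp only [ne_eq, Real.toNNReal_eq_zero, not_le]; linarith
  have hvc : ((Real.toNNReal (lams/2) : ℝ≥0) : ℝ) = lams/2 :=
    Real.coe_toNNReal _ (by linarith)
  set t : ℝ := 1 + lams*β*m with ht_def
  have ht : 0 < t := by positivity
  set A : ℝ := 1/lams + β*m with hA_def
  have hA : 0 < A := by positivity
  have hAt : A * lams = t := by rw [hA_def, ht_def]; field_simp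
  rw [integral_gaussianReal_eq hv]
  have hsum : ∀ x : ℝ, ∑ a, (c a - x)^2 = ∑ a, (c a)^2 - 2*x*∑ a, c a + m*x^2 := by
    intro x
    simp_rw [sub_sq]
    rw [Finset.sum_add_distrib, Finset.sum_sub_distrib, ← Finset.sum_mul, ← Finset.mul_sum,
      Finset.sum_const, Finset.card_univ, Fintype.card_fin, nsmul_eq_mul]
    ring
  have hexp : ∀ x : ℝ, gaussianPDFReal 0 (Real.toNNReal (lams/2)) x
        * Real.exp (-β * ∑ a, (c a - x)^2)
      = (Real.sqrt (π*lams))⁻¹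
        * Real.exp (-A * x^2 + (2*β*∑ a, c a) * x + (-β * ∑ a, (c a)^2)) := by
    intro x
    rw [gaussianPDFReal, hvc, mul_assoc, ← Real.exp_add, hsum x]
    have h2l : 2 * (lams/2) = lams := by ring
    rw [h2l]
    have hπ : 2 * π * (lams/2) = π * lams := by ring
    rw [hπ]
    congr 1
    rw [hA_def]
    field_simp
    ring
  simp_rw [hexp]
  rw [MeasureTheory.integral_const_mul, integral_rexp_quadratic hA]
  have hfac : (Real.sqrt (π*lams))⁻¹ * Real.sqrt (π/A) = (Real.sqrt t)⁻¹ := by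
    have h1 : π/A = (π*lams) * t⁻¹ := by
      rw [← hAt]; field_simp
    rw [h1, Real.sqrt_mul (show (0:ℝ) ≤ π*lams by positivity) t⁻¹, Real.sqrt_inv]
    rw [← mul_assoc, inv_mul_cancel₀ (by positivity)]
    ring
  have hBexp : -β * ∑ a, (c a)^2 + (2*β*∑ a, c a)^2/(4*A)
      = β^2*lams*(∑ a, c a)^2/t - β * ∑ a, (c a)^2 := by
    rw [← hAt]
    field_simp
    ring
  rw [← mul_assoc, hfac, hBexp]

lemma alg_i {m : ℕ} (β s : ℝ) (r ii : Fin m → ℝ) :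
    β*s*(∑ a, r a)^2 - β*∑ a, (r a)^2 + (β*s*(∑ a, ii a)^2 - β*∑ a, (ii a)^2)
      = -β * ∑ a, ∑ b, ((if a = b then (1:ℝ) else 0) - s) * (r a * r b + ii a * ii b) := by
  have hsq : ∀ f : Fin m → ℝ, (∑ a, f a)^2 = ∑ a, ∑ b, f a * f b := by
    intro f; rw [sq, Finset.sum_mul_sum]
  have h2 : ∑ i : Fin m, ∑ j : Fin m, (r i * r j + ii i * ii j)
      = (∑ a, r a)^2 + (∑ a, ii a)^2 := by
    simp_rw [Finset.sum_add_distrib, ← hsq]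
  simp_rw [sub_mul, ite_mul, one_mul, zero_mul, Finset.sum_sub_distrib, Finset.sum_ite_eq,
    Finset.mem_univ, if_true]
  simp_rw [← sq]
  simp_rw [Finset.sum_add_distrib]
  simp_rw [← Finset.mul_sum]
  rw [h2]
  ring

end Aux

/-- Gaussian integration over the data vector: for `s` a `ℂ^k`-valued
random vector with independent `CN(0, λ_s)` entries and fixed `u_1, …, u_m ∈ ℂ^k`,
`E[ Π_a e^{−β‖u_a − s‖²} ] = (1 + λ_s β m)^{−k} · exp(−β Σ_{a,b} ξ_{ab} ⟨u_a, u_b⟩)`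
where `ξ_{ab} = δ_{ab} − λ_s β/(1 + λ_s β m)`, and the double sum
`Σ_{a,b} ξ_{ab} ⟨u_a, u_b⟩` is real. -/
theorem gaussian_integration_replicas (k m : ℕ) (hk : 0 < k) (hm : 0 < m)
    (lams β : ℝ) (hls : 0 < lams) (hβ : 0 < β) (u : Fin m → Fin k → ℂ) :
    let μ : Measure (Fin k → ℝ × ℝ) := Measure.pi fun _ =>
      (gaussianReal 0 (Real.toNNReal (lams / 2))).prod
        (gaussianReal 0 (Real.toNNReal (lams / 2)))
    let ξ : Fin m → Fin m → ℝ := fun a b =>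
      (if a = b then 1 else 0) - lams * β / (1 + lams * β * m)
    let S : ℂ := ∑ a : Fin m, ∑ b : Fin m,
      (ξ a b : ℂ) * ∑ i : Fin k, (starRingEnd ℂ) (u a i) * u b i
    (∫ w : Fin k → ℝ × ℝ,
        ∏ a : Fin m,
          Real.exp (-β * ∑ i : Fin k, Complex.normSq (u a i - toC (w i))) ∂μ)
      = ((1 + lams * β * (m : ℝ)) ^ k)⁻¹ * Real.exp (-β * S.re) ∧
    S.im = 0 := by
  intro μ ξ S
  have ht : (0:ℝ) < 1 + lams*β*m := by positivity
  have hξdef : ∀ a b, ξ a b = (if a = b then (1:ℝ) else 0) - lams*β/(1+lams*β*m) :=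
    fun a b => rfl
  have hSdef : S = ∑ a, ∑ b, ((ξ a b : ℝ) : ℂ) * ∑ i, (starRingEnd ℂ) (u a i) * u b i := rfl
  have hξsymm : ∀ a b, ξ a b = ξ b a := by
    intro a b; rw [hξdef, hξdef]
    by_cases h : a = b
    · rw [h]
    · rw [if_neg h, if_neg fun hh => h hh.symm]
  -- Part 2 : S.im = 0
  have him : S.im = 0 := by
    have key : ∀ a b : Fin m, (((ξ a b : ℝ):ℂ) * ∑ i, (starRingEnd ℂ) (u a i) * u b i).im
        = -((((ξ b a : ℝ):ℂ) * ∑ i, (starRingEnd ℂ) (u b i) * u a i).im) := by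
      intro a b
      rw [hξsymm a b]
      have hconj : (∑ i, (starRingEnd ℂ) (u a i) * u b i)
          = (starRingEnd ℂ) (∑ i, (starRingEnd ℂ) (u b i) * u a i) := by
        rw [map_sum]
        refine Finset.sum_congr rfl fun i _ => ?_
        rw [map_mul, Complex.conj_conj]
        ring
      rw [hconj, Complex.im_ofReal_mul, Complex.im_ofReal_mul, Complex.conj_im]
      ring
    have hT : S.im = ∑ a, ∑ b,
        (((ξ a b : ℝ):ℂ) * ∑ i, (starRingEnd ℂ) (u a i) * u b i).im := by
      rw [hSdef, Complex.im_sum]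
      exact Finset.sum_congr rfl fun a _ => Complex.im_sum _ _
    have h2 : S.im = -S.im := by
      calc S.im = ∑ b, ∑ a,
            (((ξ a b : ℝ):ℂ) * ∑ i, (starRingEnd ℂ) (u a i) * u b i).im := by
            rw [hT]; exact Finset.sum_comm
        _ = ∑ b, ∑ a,
            -((((ξ b a : ℝ):ℂ) * ∑ i, (starRingEnd ℂ) (u b i) * u a i).im) :=
            Finset.sum_congr rfl fun b _ => Finset.sum_congr rfl fun a _ => key a b
        _ = -S.im := by rw [hT]; simp_rw [Finset.sum_neg_distrib]
    linarith
  refine ⟨?_, him⟩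
  -- Part 1 : the integral
  set ν := gaussianReal 0 (Real.toNNReal (lams/2)) with hν
  set f : Fin k → ℝ × ℝ → ℝ := fun i p =>
    Real.exp (-β * ∑ a, ((u a i).re - p.1)^2)
      * Real.exp (-β * ∑ a, ((u a i).im - p.2)^2) with hf
  have hnsq : ∀ (a : Fin m) (i : Fin k) (p : ℝ×ℝ), Complex.normSq (u a i - toC p)
      = ((u a i).re - p.1)^2 + ((u a i).im - p.2)^2 := by
    intro a i p
    simp [toC, Complex.normSq_apply]
    ring
  have hstep1 : ∀ w : Fin k → ℝ×ℝ,
      (∏ a, Real.exp (-β * ∑ i, Complex.normSq (u a i - toC (w i)))) = ∏ i, f i (w i) := by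
    intro w
    have harg : ∑ a, -β * ∑ i, Complex.normSq (u a i - toC (w i))
        = ∑ i, ((-β * ∑ a, ((u a i).re - (w i).1)^2)
            + (-β * ∑ a, ((u a i).im - (w i).2)^2)) := by
      simp_rw [hnsq]
      calc ∑ a, -β * ∑ i, (((u a i).re - (w i).1)^2 + ((u a i).im - (w i).2)^2)
          = -β * ∑ a, ∑ i, (((u a i).re - (w i).1)^2 + ((u a i).im - (w i).2)^2) :=
            (Finset.mul_sum _ _ _).symm
        _ = -β * ∑ i, ∑ a, (((u a i).re - (w i).1)^2 + ((u a i).im - (w i).2)^2) := by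
            rw [Finset.sum_comm]
        _ = ∑ i, ((-β * ∑ a, ((u a i).re - (w i).1)^2)
            + (-β * ∑ a, ((u a i).im - (w i).2)^2)) := by
            rw [Finset.mul_sum]
            refine Finset.sum_congr rfl fun i _ => ?_
            rw [Finset.sum_add_distrib]
            ring
    rw [← Real.exp_sum, harg, Real.exp_sum]
    exact Finset.prod_congr rfl fun i _ => Real.exp_add _ _
  have hstep2 : (∫ w, ∏ i, f i (w i) ∂μ) = ∏ i, ∫ p, f i p ∂(ν.prod ν) := by
    letI : MeasureSpace (ℝ × ℝ) := ⟨ν.prod ν⟩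
    haveI : IsProbabilityMeasure (volume : Measure (ℝ×ℝ)) := by
      show IsProbabilityMeasure (ν.prod ν); infer_instance
    haveI : SigmaFinite (volume : Measure (ℝ×ℝ)) := inferInstance
    exact MeasureTheory.integral_fintype_prod_eq_prod (𝕜 := ℝ) f
  have hstep3 : ∀ i, (∫ p, f i p ∂(ν.prod ν))
      = ((Real.sqrt (1+lams*β*m))⁻¹
          * Real.exp (β^2*lams*(∑ a, (u a i).re)^2/(1+lams*β*m) - β*∑ a, ((u a i).re)^2))
        * ((Real.sqrt (1+lams*β*m))⁻¹
          * Real.exp (β^2*lams*(∑ a, (u a i).im)^2/(1+lams*β*m) - β*∑ a, ((u a i).im)^2)) := by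
    intro i
    have hij := MeasureTheory.integral_prod_mul (μ := ν) (ν := ν)
      (f := fun x => Real.exp (-β * ∑ a, ((u a i).re - x)^2))
      (g := fun y => Real.exp (-β * ∑ a, ((u a i).im - y)^2))
    refine Eq.trans hij ?_
    rw [hν, gauss1d hls hβ, gauss1d hls hβ]
  -- the exponent identity
  have hSre : S.re = ∑ a, ∑ b, ξ a b
      * ∑ i, ((u a i).re*(u b i).re + (u a i).im*(u b i).im) := by
    rw [hSdef, Complex.re_sum]
    refine Finset.sum_congr rfl fun a _ => ?_
    rw [Complex.re_sum]
    refine Finset.sum_congr rfl fun b _ => ?_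
    rw [Complex.re_ofReal_mul, Complex.re_sum]
    congr 1
    refine Finset.sum_congr rfl fun i _ => ?_
    rw [Complex.mul_re, Complex.conj_re, Complex.conj_im]
    ring
  have hfinal : ∑ i, ((β^2*lams*(∑ a, (u a i).re)^2/(1+lams*β*m) - β*∑ a, ((u a i).re)^2)
        + (β^2*lams*(∑ a, (u a i).im)^2/(1+lams*β*m) - β*∑ a, ((u a i).im)^2))
      = -β * S.re := by
    rw [hSre]
    have hβs : ∀ X : ℝ, β^2*lams*X/(1+lams*β*m) = β*(lams*β/(1+lams*β*m))*X :=
      fun X => by ring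
    calc ∑ i, ((β^2*lams*(∑ a, (u a i).re)^2/(1+lams*β*m) - β*∑ a, ((u a i).re)^2)
          + (β^2*lams*(∑ a, (u a i).im)^2/(1+lams*β*m) - β*∑ a, ((u a i).im)^2))
        = ∑ i, -β * ∑ a, ∑ b, ((if a = b then (1:ℝ) else 0) - lams*β/(1+lams*β*m))
            * ((u a i).re*(u b i).re + (u a i).im*(u b i).im) := by
          refine Finset.sum_congr rfl fun i _ => ?_
          rw [hβs, hβs]
          exact alg_i β _ (fun a => (u a i).re) (fun a => (u a i).im)
      _ = -β * ∑ a, ∑ b, ξ a b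
            * ∑ i, ((u a i).re*(u b i).re + (u a i).im*(u b i).im) := by
          rw [← Finset.mul_sum]
          congr 1
          rw [Finset.sum_comm]
          refine Finset.sum_congr rfl fun a _ => ?_
          rw [Finset.sum_comm]
          refine Finset.sum_congr rfl fun b _ => ?_
          rw [hξdef a b]
          exact (Finset.mul_sum _ _ _).symm
  -- assemble
  calc (∫ w, ∏ a, Real.exp (-β * ∑ i, Complex.normSq (u a i - toC (w i))) ∂μ)
      = ∫ w, ∏ i, f i (w i) ∂μ :=
        integral_congr_ae (Filter.Eventually.of_forall fun w => hstep1 w)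
    _ = ∏ i, ∫ p, f i p ∂(ν.prod ν) := hstep2
    _ = ∏ i : Fin k, (((Real.sqrt (1+lams*β*m))⁻¹
          * Real.exp (β^2*lams*(∑ a, (u a i).re)^2/(1+lams*β*m) - β*∑ a, ((u a i).re)^2))
        * ((Real.sqrt (1+lams*β*m))⁻¹
          * Real.exp (β^2*lams*(∑ a, (u a i).im)^2/(1+lams*β*m) - β*∑ a, ((u a i).im)^2))) :=
        Finset.prod_congr rfl fun i _ => hstep3 i
    _ = ((1 + lams * β * (m : ℝ)) ^ k)⁻¹
        * Real.exp (∑ i, ((β^2*lams*(∑ a, (u a i).re)^2/(1+lams*β*m) - β*∑ a, ((u a i).re)^2)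
          + (β^2*lams*(∑ a, (u a i).im)^2/(1+lams*β*m) - β*∑ a, ((u a i).im)^2))) := by
        have hterm : ∀ i : Fin k, ((Real.sqrt (1+lams*β*m))⁻¹
              * Real.exp (β^2*lams*(∑ a, (u a i).re)^2/(1+lams*β*m) - β*∑ a, ((u a i).re)^2))
            * ((Real.sqrt (1+lams*β*m))⁻¹
              * Real.exp (β^2*lams*(∑ a, (u a i).im)^2/(1+lams*β*m) - β*∑ a, ((u a i).im)^2))
            = (1+lams*β*m)⁻¹
              * Real.exp ((β^2*lams*(∑ a, (u a i).re)^2/(1+lams*β*m) - β*∑ a, ((u a i).re)^2)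
                + (β^2*lams*(∑ a, (u a i).im)^2/(1+lams*β*m) - β*∑ a, ((u a i).im)^2)) := by
          intro i
          rw [Real.exp_add]
          have hss : (Real.sqrt (1+lams*β*m))⁻¹ * (Real.sqrt (1+lams*β*m))⁻¹
              = (1+lams*β*m)⁻¹ := by
            rw [← mul_inv, Real.mul_self_sqrt ht.le]
          rw [← hss]; ring
        rw [Finset.prod_congr rfl (fun i _ => hterm i), Finset.prod_mul_distrib,
          Finset.prod_const, Finset.card_univ, Fintype.card_fin, ← Real.exp_sum, ← inv_pow]
    _ = ((1 + lams * β * (m : ℝ)) ^ k)⁻¹ * Real.exp (-β * S.re) := by rw [hfinal]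
end
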